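/- Let R be a commutative noetherian ring with unity, let a be an ideal of R, and let f : M → N be an R-module homomorphism where both M and N are a-adically complete. Then im f is an a-adically complete R-module. -/

import Mathlib

open Submodule

section Helpers

variable {R : Type*} [CommRing R] (I : Ideal R)
variable {M N : Type*} [AddCommGroup M] [Module R M] [AddCommGroup N] [Module R N]

private lemma isHausdorff_of_inj (h : Function.Injective (AdicCompletion.of I N)) :
    IsHausdorff I N := by
  constructor
  intro x hx
  apply h
  ext n
  simp only [AdicCompletion.of_apply, map_zero, AdicCompletion.val_zero, Pi.zero_apply,
    Submodule.mkQ_apply, Submodule.Quotient.mk_eq_zero]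
  exact SModEq.zero.mp (hx n)

private lemma isPrecomplete_of_surj (h : Function.Surjective (AdicCompletion.of I M)) :
    IsPrecomplete I M := by
  constructor
  intro g hg
  set x : AdicCompletion I M :=
    ⟨fun n => Submodule.Quotient.mk (g n), by
      intro m n hmn
      change Submodule.Quotient.mk (g n) = Submodule.Quotient.mk (g m)
      exact (hg hmn).symm⟩ with hx
  obtain ⟨L, hL⟩ := h x
  refine ⟨L, fun n => ?_⟩
  have := congrArg (fun z => z.val n) hL
  simpa [hx, AdicCompletion.of_apply, SModEq.def] using this.symm

private lemma bij_of_of_complete (h1 : IsHausdorff I M) (h2 : IsPrecomplete I M) :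
    Function.Bijective (AdicCompletion.of I M) := by
  constructor
  · intro x y hxy
    have hsub : ∀ n : ℕ, x - y ∈ (I ^ n • ⊤ : Submodule R M) := by
      intro n
      have := congrArg (fun z => z.val n) hxy
      simpa [AdicCompletion.of_apply, Submodule.Quotient.eq] using this
    have := h1.haus (x - y) (fun n => SModEq.zero.mpr (hsub n))
    exact sub_eq_zero.mp this
  · intro x
    choose g hg using fun n => Submodule.Quotient.mk_surjective _ (x.val n)
    have hc : ∀ {m n : ℕ}, m ≤ n → g m ≡ g n [SMOD (I ^ m • ⊤ : Submodule R M)] := by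
      intro m n hmn
      have hx := x.property hmn
      rw [← hg n, ← hg m] at hx
      change Submodule.Quotient.mk (g n) = Submodule.Quotient.mk (g m) at hx
      exact hx.symm
    obtain ⟨L, hL⟩ := h2.prec hc
    refine ⟨L, ?_⟩
    ext n
    rw [AdicCompletion.of_apply, Submodule.mkQ_apply, ← hg n]
    exact (hL n).symm

private lemma isHausdorff_submodule (S : Submodule R N) (h : IsHausdorff I N) :
    IsHausdorff I S := by
  constructor
  intro x hx
  have hmem : ∀ n : ℕ, (x : N) ∈ (I ^ n • ⊤ : Submodule R N) := by
    intro n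
    have h1 : (x : N) ∈ (I ^ n • ⊤ : Submodule R S).map S.subtype :=
      ⟨x, SModEq.zero.mp (hx n), rfl⟩
    rw [Submodule.map_smul'', Submodule.map_top, Submodule.range_subtype] at h1
    exact Submodule.smul_mono (le_refl (I ^ n)) le_top h1
  have := h.haus x (fun n => SModEq.zero.mpr (hmem n))
  exact Subtype.ext this

private lemma smul_top_quot (K : Submodule R M) (n : ℕ) :
    (I ^ n • ⊤ : Submodule R (M ⧸ K)) = (I ^ n • ⊤ : Submodule R M).map K.mkQ := by
  rw [Submodule.map_smul'', Submodule.map_top, Submodule.range_mkQ]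

private lemma isPrecomplete_quotient (K : Submodule R M) (h : IsPrecomplete I M) :
    IsPrecomplete I (M ⧸ K) := by
  constructor
  intro g hg
  have hd : ∀ n : ℕ, ∃ d : M, d ∈ (I ^ n • ⊤ : Submodule R M) ∧
      Submodule.Quotient.mk d = g (n + 1) - g n := by
    intro n
    have hmem : g (n + 1) - g n ∈ (I ^ n • ⊤ : Submodule R (M ⧸ K)) := by
      have := (hg (Nat.le_succ n))
      rw [SModEq.sub_mem] at this
      simpa using neg_mem this
    rw [smul_top_quot] at hmem
    obtain ⟨d, hd1, hd2⟩ := hmem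
    exact ⟨d, hd1, hd2⟩
  choose d hd1 hd2 using hd
  obtain ⟨m0, hm0⟩ := Submodule.Quotient.mk_surjective K (g 0)
  set h' : ℕ → M := fun n => m0 + (Finset.range n).sum d with hh'
  have hmk : ∀ n, (Submodule.Quotient.mk (h' n) : M ⧸ K) = g n := by
    intro n
    induction n with
    | zero => simpa [hh'] using hm0
    | succ n ih =>
      have heq : h' (n + 1) = h' n + d n := by
        simp [hh', Finset.sum_range_succ, add_assoc]
      rw [heq, Submodule.Quotient.mk_add, ih, hd2, add_sub_cancel]
  have hcauchy : ∀ {m n : ℕ}, m ≤ n → h' m ≡ h' n [SMOD (I ^ m • ⊤ : Submodule R M)] := by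
    intro m n hmn
    rw [SModEq.sub_mem]
    have heq : h' m - h' n = -((Finset.Ico m n).sum d) := by
      rw [Finset.sum_Ico_eq_sub d hmn]
      simp [hh']
    rw [heq]
    refine neg_mem (Submodule.sum_mem _ (fun i hi => ?_))
    have : (I ^ i • ⊤ : Submodule R M) ≤ (I ^ m • ⊤ : Submodule R M) :=
      Submodule.smul_mono_left (Ideal.pow_le_pow_right (Finset.mem_Ico.mp hi).1)
    exact this (hd1 i)
  obtain ⟨L, hL⟩ := h.prec hcauchy
  refine ⟨Submodule.Quotient.mk L, fun n => ?_⟩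
  rw [SModEq.sub_mem, ← hmk n, ← Submodule.Quotient.mk_sub, smul_top_quot]
  have := (hL n)
  rw [SModEq.sub_mem] at this
  exact ⟨h' n - L, this, rfl⟩

private lemma smul_top_map_equiv (e : M ≃ₗ[R] N) (n : ℕ) :
    (I ^ n • ⊤ : Submodule R M).map (e : M →ₗ[R] N) = (I ^ n • ⊤ : Submodule R N) := by
  rw [Submodule.map_smul'', Submodule.map_top, LinearEquiv.range]

private lemma isPrecomplete_of_equiv (e : M ≃ₗ[R] N) (h : IsPrecomplete I M) :
    IsPrecomplete I N := by
  constructor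
  intro g hg
  have hc : ∀ {m n : ℕ}, m ≤ n →
      e.symm (g m) ≡ e.symm (g n) [SMOD (I ^ m • ⊤ : Submodule R M)] := by
    intro m n hmn
    rw [SModEq.sub_mem, ← map_sub]
    have hmem : g m - g n ∈ (I ^ m • ⊤ : Submodule R M).map (e : M →ₗ[R] N) := by
      rw [smul_top_map_equiv]
      exact SModEq.sub_mem.mp (hg hmn)
    obtain ⟨x, hx, hxe⟩ := hmem
    simpa [← hxe] using hx
  obtain ⟨L, hL⟩ := h.prec hc
  refine ⟨e L, fun n => ?_⟩
  rw [SModEq.sub_mem]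
  have hmem : e.symm (g n) - L ∈ (I ^ n • ⊤ : Submodule R M) := SModEq.sub_mem.mp (hL n)
  have : e (e.symm (g n) - L) ∈ (I ^ n • ⊤ : Submodule R N) := by
    rw [← smul_top_map_equiv I e n]
    exact ⟨_, hmem, rfl⟩
  simpa using this

end Helpers

/-- If `f : M → N` is a homomorphism of `a`-adically complete modules,
then `im f` is `a`-adically complete. -/
theorem image_adicComplete_of_complete
    {R : Type*} [CommRing R] [IsNoetherianRing R] (a : Ideal R)
    {M N : Type*} [AddCommGroup M] [Module R M] [AddCommGroup N] [Module R N]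
    (hM : Function.Bijective (AdicCompletion.of a M))
    (hN : Function.Bijective (AdicCompletion.of a N))
    (f : M →ₗ[R] N) :
    Function.Bijective (AdicCompletion.of a (LinearMap.range f)) := by
  have hMp : IsPrecomplete a M := isPrecomplete_of_surj a hM.surjective
  have hNh : IsHausdorff a N := isHausdorff_of_inj a hN.injective
  have h1 : IsHausdorff a (LinearMap.range f) :=
    isHausdorff_submodule a (LinearMap.range f) hNh
  have h2 : IsPrecomplete a (LinearMap.range f) :=
    isPrecomplete_of_equiv a f.quotKerEquivRange
      (isPrecomplete_quotient a (LinearMap.ker f) hMp)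
  exact bij_of_of_complete a h1 h2
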